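/- Suppose (a_k)_{k≥0} and (b_k)_{k≥0} are sequences of non-negative reals with a_0 ≤ 1, b_0 = 1, and a_{k+1} ≤ 0.2·a_k + 3·b_{k+1} for all k ≥ 0. Let Q = α·(∑_{k≥0} 2^k a_k) + α for some α > 0 (assuming the sums converge), and let OPT ≥ (1/2)·∑_{k≥0} 2^{k−1} b_k. Then Q ≤ 20·α·OPT. -/
import Mathlib


theorem geometric_recurrence_bound (a b : ℕ → ℝ) (α OPT : ℝ)
    (ha : ∀ k, 0 ≤ a k) (hb : ∀ k, 0 ≤ b k)
    (ha0 : a 0 ≤ 1) (hb0 : b 0 = 1)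
    (hrec : ∀ k, a (k + 1) ≤ 0.2 * a k + 3 * b (k + 1))
    (hsa : Summable (fun k : ℕ => (2:ℝ) ^ k * a k))
    (hsb : Summable (fun k : ℕ => (2:ℝ) ^ k / 2 * b k))
    (hα : 0 < α)
    (hOPT : (1 / 2) * ∑' k : ℕ, (2:ℝ) ^ k / 2 * b k ≤ OPT) :
    α * (∑' k : ℕ, (2:ℝ) ^ k * a k) + α ≤ 20 * α * OPT := by
  set f : ℕ → ℝ := fun k => (2:ℝ) ^ k * a k with hf
  set g : ℕ → ℝ := fun k => (2:ℝ) ^ k / 2 * b k with hg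
  have hsf1 : Summable (fun k => f (k + 1)) := (summable_nat_add_iff 1).2 hsa
  have hsg1 : Summable (fun k => g (k + 1)) := (summable_nat_add_iff 1).2 hsb
  have hAeq : ∑' k, f k = f 0 + ∑' k, f (k + 1) := Summable.tsum_eq_zero_add hsa
  have hBeq : ∑' k, g k = g 0 + ∑' k, g (k + 1) := Summable.tsum_eq_zero_add hsb
  set A := ∑' k, f k with hA
  set B := ∑' k, g k with hB
  have hstep : ∀ k, f (k + 1) ≤ 0.4 * f k + 6 * g (k + 1) := by
    intro k
    have h := hrec k
    have h2 : (0:ℝ) ≤ 2 ^ k := by positivity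
    simp only [hf, hg, pow_succ]
    nlinarith [mul_le_mul_of_nonneg_left h h2]
  have hsum : ∑' k, f (k + 1) ≤ 0.4 * A + 6 * ∑' k, g (k + 1) := by
    have h1 : ∑' k, f (k + 1) ≤ ∑' k, (0.4 * f k + 6 * g (k + 1)) :=
      Summable.tsum_le_tsum hstep hsf1 ((hsa.mul_left 0.4).add (hsg1.mul_left 6))
    rwa [Summable.tsum_add (hsa.mul_left 0.4) (hsg1.mul_left 6), tsum_mul_left, tsum_mul_left] at h1
  have hf0 : f 0 = a 0 := by simp [hf]
  have hg0 : g 0 = 1 / 2 := by simp [hg, hb0]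
  have hABound : A + 1 ≤ 20 * OPT := by
    have hBO : B ≤ 2 * OPT := by linarith
    rw [hf0] at hAeq
    rw [hg0] at hBeq
    linarith
  calc α * A + α = α * (A + 1) := by ring
    _ ≤ α * (20 * OPT) := by
        exact mul_le_mul_of_nonneg_left hABound hα.le
    _ = 20 * α * OPT := by ring
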